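/- Let d be a positive integer. Let h_1, …, h_M be finitely many mixing densities, each satisfying ∫_0^∞ u^{d/2} h_i(u) du < ∞, and each either zero near the origin or faster than polynomial near the origin. Let w_1, …, w_M > 0 with w_1 + ⋯ + w_M = 1, and set h(u) = Σ_{i=1}^M w_i h_i(u). Then for every λ > 0 there exists L ∈ ℝ such that for all s ≥ 0, ∫_0^∞ u^{(d-2)/2} e^{-su/2} h(u) du ≤ (λ s + L) · ∫_0^∞ u^{d/2} e^{-su/2} h(u) du. -/

import Mathlib

open MeasureTheory Set
open scoped ENNReal

/-- A mixing density: a Borel measurable function on `(0,∞)` (extended to all of `ℝ`),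
nonnegative on `(0,∞)`, integrating to 1 over `(0,∞)`. -/
def IsMixingDensity (h : ℝ → ℝ) : Prop :=
  Measurable h ∧ (∀ u ∈ Ioi (0:ℝ), 0 ≤ h u) ∧
    ∫⁻ u in Ioi (0:ℝ), ENNReal.ofReal (h u) = 1

/-- A mixing density is zero near the origin if it vanishes on some interval `(0, δ)`. -/
def ZeroNearOrigin (h : ℝ → ℝ) : Prop :=
  ∃ δ > 0, ∀ u ∈ Ioo (0:ℝ) δ, h u = 0

/-- A mixing density is faster than polynomial near the origin: it is strictly positive in a
neighborhood of `0` and, for every `c > 0`, `u ↦ h(u)/u^c` is strictly increasing on some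
interval `(0, η_c)`. -/
def FasterThanPolynomialNearOrigin (h : ℝ → ℝ) : Prop :=
  (∃ ε > 0, ∀ u ∈ Ioo (0:ℝ) ε, 0 < h u) ∧
    ∀ c : ℝ, 0 < c → ∃ η > 0, StrictMonoOn (fun u => h u / u ^ c) (Ioo (0:ℝ) η)

private lemma measF {g : ℝ → ℝ} (hg : Measurable g) (p s : ℝ) :
    Measurable fun u : ℝ => ENNReal.ofReal (u ^ p * Real.exp (-(s * u) / 2) * g u) := by
  fun_prop

private lemma lint_rpow {t q : ℝ} (ht : 0 < t) (hq : 0 ≤ q) :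
    ∫⁻ u in Ioo (0:ℝ) t, ENNReal.ofReal (u ^ q) = ENNReal.ofReal (t ^ (q + 1) / (q + 1)) := by
  have h1 : (Ioo (0:ℝ) t) =ᵐ[volume] (Ioc (0:ℝ) t) := Ioo_ae_eq_Ioc
  rw [setLIntegral_congr h1]
  have hint : IntegrableOn (fun u : ℝ => u ^ q) (Ioc 0 t) := by
    have := (intervalIntegral.intervalIntegrable_rpow' (a:=0) (b:=t) (r:=q) (by linarith))
    rwa [intervalIntegrable_iff, uIoc_of_le ht.le] at this
  rw [← ofReal_integral_eq_lintegral_ofReal hint ?_]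
  · congr 1
    rw [← intervalIntegral.integral_of_le ht.le,
      integral_rpow (Or.inl (by linarith)),
      Real.zero_rpow (by linarith : (0:ℝ) < q + 1).ne']
    ring
  · filter_upwards [self_mem_ae_restrict measurableSet_Ioc] with u hu
    exact Real.rpow_nonneg hu.1.le q

private lemma pos_interval {g : ℝ → ℝ}
    (h1 : ∫⁻ u in Ioi (0:ℝ), ENNReal.ofReal (g u) = 1) :
    ∃ a b : ℝ, 0 < a ∧ a < b ∧ 0 < ∫⁻ u in Ioc a b, ENNReal.ofReal (g u) := by
  by_contra hcon
  push_neg at hcon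
  have h0 : ∀ n : ℕ, ∫⁻ u in Ioc ((n:ℝ)+1)⁻¹ ((n:ℝ)+2), ENNReal.ofReal (g u) = 0 := by
    intro n
    have ha : (0:ℝ) < ((n:ℝ)+1)⁻¹ := by positivity
    have hab : ((n:ℝ)+1)⁻¹ < (n:ℝ)+2 := by
      have h1n : ((n:ℝ)+1)⁻¹ ≤ 1 := by
        rw [inv_le_one_iff₀]; right; linarith [Nat.cast_nonneg (α := ℝ) n]
      linarith [Nat.cast_nonneg (α := ℝ) n]
    exact le_antisymm (hcon _ _ ha hab) zero_le
  have hsub : (Ioi (0:ℝ)) ⊆ ⋃ n : ℕ, Ioc ((n:ℝ)+1)⁻¹ ((n:ℝ)+2) := by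
    intro u hu
    simp only [mem_Ioi] at hu
    obtain ⟨n, hn⟩ := exists_nat_gt (max (1/u) u)
    refine mem_iUnion.2 ⟨n, ?_, ?_⟩
    · have : 1/u < n := lt_of_le_of_lt (le_max_left _ _) hn
      rw [div_lt_iff₀ hu] at this
      rw [inv_lt_iff_one_lt_mul₀ (by positivity)]
      nlinarith
    · have : u < n := lt_of_le_of_lt (le_max_right _ _) hn
      linarith
  have hle : (1:ℝ≥0∞) ≤ ∑' n : ℕ, ∫⁻ u in Ioc ((n:ℝ)+1)⁻¹ ((n:ℝ)+2), ENNReal.ofReal (g u) := by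
    rw [← h1]
    exact le_trans (lintegral_mono_set hsub) (lintegral_iUnion_le _ _)
  simp [h0] at hle


private lemma rpow_p1_le {p1 p2 b u : ℝ} (hp12 : p1 + 1 = p2) (hb : 0 < b) (hu : b ≤ u) :
    u ^ p1 ≤ (1/b) * u ^ p2 := by
  have hu0 : 0 < u := hb.trans_le hu
  have h1 : u ^ p2 = u ^ p1 * u := by
    rw [← hp12, Real.rpow_add hu0, Real.rpow_one]
  have h2 : u ^ p1 = u ^ p2 * u⁻¹ := by rw [h1]; field_simp
  rw [h2]
  have hinv : u⁻¹ ≤ b⁻¹ := inv_anti₀ hb hu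
  calc u ^ p2 * u⁻¹ ≤ u ^ p2 * b⁻¹ :=
        mul_le_mul_of_nonneg_left hinv (Real.rpow_nonneg hu0.le p2)
    _ = (1/b) * u ^ p2 := by ring

set_option maxHeartbeats 2000000 in
private lemma key (d : ℕ) (hd : 0 < d) (g : ℝ → ℝ) (hgmeas : Measurable g)
    (hgnn : ∀ u ∈ Ioi (0:ℝ), 0 ≤ g u)
    (hg1 : ∫⁻ u in Ioi (0:ℝ), ENNReal.ofReal (g u) = 1)
    (hcond : ∫⁻ u in Ioi (0:ℝ), ENNReal.ofReal (u ^ ((d:ℝ)/2) * g u) < ⊤)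
    (hcl : ZeroNearOrigin g ∨ FasterThanPolynomialNearOrigin g)
    (lam : ℝ) (hlam : 0 < lam) :
    ∃ L : ℝ, 0 ≤ L ∧ ∀ s : ℝ, 0 ≤ s →
      (∫⁻ u in Ioi (0:ℝ),
          ENNReal.ofReal (u ^ (((d:ℝ)-2)/2) * Real.exp (-(s*u)/2) * g u))
        ≤ ENNReal.ofReal (lam * s + L) *
          ∫⁻ u in Ioi (0:ℝ),
            ENNReal.ofReal (u ^ ((d:ℝ)/2) * Real.exp (-(s*u)/2) * g u) := by
  set p1 : ℝ := ((d:ℝ)-2)/2 with hp1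
  set p2 : ℝ := (d:ℝ)/2 with hp2
  have hd1 : (1:ℝ) ≤ (d:ℝ) := by exact_mod_cast hd
  have hp2pos : 0 < p2 := by rw [hp2]; positivity
  have hp12 : p1 + 1 = p2 := by rw [hp1, hp2]; ring
  have hp1lb : -(1/2 : ℝ) ≤ p1 := by rw [hp1]; linarith
  rcases hcl with ⟨δ, hδ, hzero⟩ | ⟨⟨ε, hε, hpos⟩, hmono⟩
  · -- zero near origin
    refine ⟨1/δ, by positivity, fun s hs => ?_⟩
    have hpt : ∀ u ∈ Ioi (0:ℝ),
        ENNReal.ofReal (u ^ p1 * Real.exp (-(s*u)/2) * g u)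
          ≤ ENNReal.ofReal ((1/δ) * (u ^ p2 * Real.exp (-(s*u)/2) * g u)) := by
      intro u hu
      simp only [mem_Ioi] at hu
      by_cases hu' : u < δ
      · rw [hzero u ⟨hu, hu'⟩]
        simp
      · push_neg at hu'
        apply ENNReal.ofReal_le_ofReal
        have hkey : u ^ p1 ≤ (1/δ) * u ^ p2 := by
          have h1 : u ^ p2 = u ^ p1 * u := by
            rw [← hp12, Real.rpow_add hu, Real.rpow_one]
          have h2 : u ^ p1 = u ^ p2 * u⁻¹ := by
            rw [h1]; field_simp
          rw [h2]
          have hinv : u⁻¹ ≤ δ⁻¹ := by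
            apply inv_anti₀ hδ hu'
          calc u ^ p2 * u⁻¹ ≤ u ^ p2 * δ⁻¹ :=
                mul_le_mul_of_nonneg_left hinv (Real.rpow_nonneg hu.le p2)
            _ = (1/δ) * u ^ p2 := by ring
        have hnn : 0 ≤ Real.exp (-(s*u)/2) * g u :=
          mul_nonneg (Real.exp_pos _).le (hgnn u hu)
        calc u ^ p1 * Real.exp (-(s*u)/2) * g u
            = u ^ p1 * (Real.exp (-(s*u)/2) * g u) := by ring
          _ ≤ ((1/δ) * u ^ p2) * (Real.exp (-(s*u)/2) * g u) :=
              mul_le_mul_of_nonneg_right hkey hnn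
          _ = (1/δ) * (u ^ p2 * Real.exp (-(s*u)/2) * g u) := by ring
    calc (∫⁻ u in Ioi (0:ℝ), ENNReal.ofReal (u ^ p1 * Real.exp (-(s*u)/2) * g u))
        ≤ ∫⁻ u in Ioi (0:ℝ),
            ENNReal.ofReal ((1/δ) * (u ^ p2 * Real.exp (-(s*u)/2) * g u)) := by
          refine setLIntegral_mono ?_ hpt
          fun_prop
      _ = ENNReal.ofReal (1/δ) *
            ∫⁻ u in Ioi (0:ℝ), ENNReal.ofReal (u ^ p2 * Real.exp (-(s*u)/2) * g u) := by
          simp_rw [ENNReal.ofReal_mul (by positivity : (0:ℝ) ≤ 1/δ)]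
          exact lintegral_const_mul _ (measF hgmeas p2 s)
      _ ≤ ENNReal.ofReal (lam * s + 1/δ) *
            ∫⁻ u in Ioi (0:ℝ), ENNReal.ofReal (u ^ p2 * Real.exp (-(s*u)/2) * g u) := by
          gcongr
          nlinarith
  · -- faster than polynomial near origin
    obtain ⟨c, hcdef⟩ : ∃ x : ℝ, x = max 1 (Real.exp (2/lam)) := ⟨_, rfl⟩
    have hc1 : (1:ℝ) ≤ c := by rw [hcdef]; exact le_max_left _ _
    have hcpos : (0:ℝ) < c := by linarith
    have hce : Real.exp (2/lam) ≤ c := by rw [hcdef]; exact le_max_right _ _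
    obtain ⟨η₀, hη₀, hsm₀⟩ := hmono c hcpos
    obtain ⟨η, hηdef⟩ : ∃ x : ℝ, x = min η₀ ε := ⟨_, rfl⟩
    have hη : 0 < η := by rw [hηdef]; exact lt_min hη₀ hε
    have hsm : StrictMonoOn (fun u => g u / u ^ c) (Ioo 0 η) := by
      rw [hηdef]
      exact hsm₀.mono (Ioo_subset_Ioo_right (min_le_left _ _))
    obtain ⟨s₀, hs₀def⟩ : ∃ x : ℝ, x = 4/(lam*η) + 1 := ⟨_, rfl⟩
    have hs₀pos : 0 < s₀ := by rw [hs₀def]; positivity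
    obtain ⟨a, hadef⟩ : ∃ x : ℝ, x = η/2 := ⟨_, rfl⟩
    have ha : 0 < a := by rw [hadef]; positivity
    have haη : a < η := by rw [hadef]; linarith
    have haIoo : a ∈ Ioo (0:ℝ) η := ⟨ha, haη⟩
    have hgann : 0 ≤ g a := hgnn a ha
    have hq : 0 ≤ p1 + c := by linarith
    -- finiteness of the numerator at s = 0
    set Cnum : ℝ≥0∞ := ∫⁻ u in Ioi (0:ℝ), ENNReal.ofReal (u ^ p1 * g u) with hCdef
    have hCnumlt : Cnum < ⊤ := by
      have hsub : Ioi (0:ℝ) ⊆ Ioo 0 a ∪ Ici a := by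
        intro u hu
        rcases lt_or_ge u a with h'|h'
        · exact Or.inl ⟨hu, h'⟩
        · exact Or.inr h'
      have hsplit : Cnum ≤ (∫⁻ u in Ioo (0:ℝ) a, ENNReal.ofReal (u ^ p1 * g u)) +
          ∫⁻ u in Ici a, ENNReal.ofReal (u ^ p1 * g u) :=
        (lintegral_mono_set hsub).trans (lintegral_union_le _ _ _)
      have hpart1 : (∫⁻ u in Ioo (0:ℝ) a, ENNReal.ofReal (u ^ p1 * g u)) ≤
          ENNReal.ofReal (a ^ p1 * g a) * volume (Ioo (0:ℝ) a) := by
        refine le_trans (setLIntegral_mono measurable_const ?_) (le_of_eq (setLIntegral_const _ _))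
        intro u hu
        apply ENNReal.ofReal_le_ofReal
        have hu0 : 0 < u := hu.1
        have hua : u < a := hu.2
        have huη : u ∈ Ioo (0:ℝ) η := ⟨hu0, hua.trans haη⟩
        have hmm := (hsm huη haIoo hua).le
        have hacpos : (0:ℝ) < a ^ c := Real.rpow_pos_of_pos ha c
        have hucpos : (0:ℝ) < u ^ c := Real.rpow_pos_of_pos hu0 c
        have hgu : g u ≤ (g a / a ^ c) * u ^ c := by
          have hrw : g u = (g u / u ^ c) * u ^ c := by field_simp
          rw [hrw]
          exact mul_le_mul_of_nonneg_right hmm hucpos.le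
        have hup1 : 0 ≤ u ^ p1 := Real.rpow_nonneg hu0.le _
        calc u ^ p1 * g u ≤ u ^ p1 * ((g a / a ^ c) * u ^ c) :=
              mul_le_mul_of_nonneg_left hgu hup1
          _ = (u ^ p1 * u ^ c) * (g a / a ^ c) := by ring
          _ = u ^ (p1 + c) * (g a / a ^ c) := by rw [← Real.rpow_add hu0]
          _ ≤ a ^ (p1 + c) * (g a / a ^ c) := by
              apply mul_le_mul_of_nonneg_right
                (Real.rpow_le_rpow hu0.le hua.le hq)
                (div_nonneg hgann hacpos.le)
          _ = (a ^ p1 * a ^ c) * (g a / a ^ c) := by rw [← Real.rpow_add ha]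
          _ = a ^ p1 * g a := by
              field_simp
      have hpart2 : (∫⁻ u in Ici a, ENNReal.ofReal (u ^ p1 * g u)) ≤
          ENNReal.ofReal (1/a) * ∫⁻ u in Ioi (0:ℝ), ENNReal.ofReal (u ^ p2 * g u) := by
        have hpt : ∀ u ∈ Ici a, ENNReal.ofReal (u ^ p1 * g u) ≤
            ENNReal.ofReal ((1/a) * (u ^ p2 * g u)) := by
          intro u hu
          have hu0 : 0 < u := ha.trans_le hu
          apply ENNReal.ofReal_le_ofReal
          calc u ^ p1 * g u ≤ ((1/a) * u ^ p2) * g u :=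
                mul_le_mul_of_nonneg_right (rpow_p1_le hp12 ha hu) (hgnn u hu0)
            _ = (1/a) * (u ^ p2 * g u) := by ring
        calc (∫⁻ u in Ici a, ENNReal.ofReal (u ^ p1 * g u))
            ≤ ∫⁻ u in Ici a, ENNReal.ofReal ((1/a) * (u ^ p2 * g u)) :=
              setLIntegral_mono (by fun_prop) hpt
          _ = ENNReal.ofReal (1/a) * ∫⁻ u in Ici a, ENNReal.ofReal (u ^ p2 * g u) := by
              simp_rw [ENNReal.ofReal_mul (by positivity : (0:ℝ) ≤ 1/a)]
              exact lintegral_const_mul _ (by fun_prop)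
          _ ≤ ENNReal.ofReal (1/a) * ∫⁻ u in Ioi (0:ℝ), ENNReal.ofReal (u ^ p2 * g u) :=
              mul_le_mul_right (lintegral_mono_set fun u hu => mem_Ioi.mpr (ha.trans_le hu)) _
      refine lt_of_le_of_lt hsplit (ENNReal.add_lt_top.mpr ⟨?_, ?_⟩)
      · exact lt_of_le_of_lt hpart1 (ENNReal.mul_lt_top ENNReal.ofReal_lt_top
          (by rw [Real.volume_Ioo]; exact ENNReal.ofReal_lt_top))
      · exact lt_of_le_of_lt hpart2 (ENNReal.mul_lt_top ENNReal.ofReal_lt_top hcond)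
    -- positive lower bound for the denominator, for s ≤ s₀
    obtain ⟨A, B, hA, hAB, hI⟩ := pos_interval hg1
    set I : ℝ≥0∞ := ∫⁻ u in Ioc A B, ENNReal.ofReal (g u) with hIdef
    have hIne : I ≠ ⊤ := by
      have hle1 : I ≤ 1 := by
        rw [← hg1]
        exact lintegral_mono_set fun u hu => mem_Ioi.mpr (hA.trans hu.1)
      exact (lt_of_le_of_lt hle1 ENNReal.one_lt_top).ne
    set ρ : ℝ≥0∞ := ENNReal.ofReal (A ^ p2 * Real.exp (-(s₀*B)/2)) * I with hρdef
    have hρpos : 0 < ρ := by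
      apply ENNReal.mul_pos _ hI.ne'
      exact (ENNReal.ofReal_pos.mpr (by positivity)).ne'
    have hρne : ρ ≠ ⊤ := ENNReal.mul_ne_top ENNReal.ofReal_ne_top hIne
    have hρt : 0 < ρ.toReal := ENNReal.toReal_pos hρpos.ne' hρne
    obtain ⟨L, hLdef⟩ : ∃ x : ℝ, x = max (Cnum.toReal / ρ.toReal) 0 := ⟨_, rfl⟩
    refine ⟨L, by rw [hLdef]; exact le_max_right _ _, fun s hs => ?_⟩
    rcases le_or_gt s s₀ with hss | hss
    · -- small s
      have hLHS : (∫⁻ u in Ioi (0:ℝ), ENNReal.ofReal (u ^ p1 * Real.exp (-(s*u)/2) * g u))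
          ≤ Cnum := by
        refine setLIntegral_mono (by fun_prop) ?_
        intro u hu
        have hu0 : 0 < u := hu
        apply ENNReal.ofReal_le_ofReal
        have he1 : Real.exp (-(s*u)/2) ≤ 1 := by
          apply Real.exp_le_one_iff.mpr
          nlinarith
        have hup1 : 0 ≤ u ^ p1 := Real.rpow_nonneg hu0.le _
        calc u ^ p1 * Real.exp (-(s*u)/2) * g u ≤ u ^ p1 * 1 * g u :=
              mul_le_mul_of_nonneg_right (mul_le_mul_of_nonneg_left he1 hup1) (hgnn u hu0)
          _ = u ^ p1 * g u := by ring
      have hRHS : ρ ≤ ∫⁻ u in Ioi (0:ℝ),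
          ENNReal.ofReal (u ^ p2 * Real.exp (-(s*u)/2) * g u) := by
        refine le_trans ?_ (lintegral_mono_set fun u (hu : u ∈ Ioc A B) => mem_Ioi.mpr (hA.trans hu.1))
        have hpt : ∀ u ∈ Ioc A B,
            ENNReal.ofReal ((A ^ p2 * Real.exp (-(s₀*B)/2)) * g u) ≤
            ENNReal.ofReal (u ^ p2 * Real.exp (-(s*u)/2) * g u) := by
          intro u hu
          apply ENNReal.ofReal_le_ofReal
          have hu0 : 0 < u := hA.trans hu.1
          have h1 : A ^ p2 ≤ u ^ p2 := Real.rpow_le_rpow hA.le hu.1.le hp2pos.le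
          have h2 : Real.exp (-(s₀*B)/2) ≤ Real.exp (-(s*u)/2) := by
            apply Real.exp_le_exp.mpr
            have hsu : s * u ≤ s₀ * B := by nlinarith [hu.2, hu.1]
            linarith
          calc (A ^ p2 * Real.exp (-(s₀*B)/2)) * g u
              ≤ (u ^ p2 * Real.exp (-(s*u)/2)) * g u := by
                apply mul_le_mul_of_nonneg_right _ (hgnn u hu0)
                exact mul_le_mul h1 h2 (Real.exp_pos _).le (Real.rpow_nonneg hu0.le _)
            _ = u ^ p2 * Real.exp (-(s*u)/2) * g u := by ring
        calc ρ = ∫⁻ u in Ioc A B,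
              ENNReal.ofReal ((A ^ p2 * Real.exp (-(s₀*B)/2)) * g u) := by
              rw [hρdef]
              simp_rw [ENNReal.ofReal_mul (by positivity :
                (0:ℝ) ≤ A ^ p2 * Real.exp (-(s₀*B)/2))]
              exact (lintegral_const_mul _ hgmeas.ennreal_ofReal).symm
          _ ≤ _ := setLIntegral_mono (measF hgmeas p2 s) hpt
      calc (∫⁻ u in Ioi (0:ℝ), ENNReal.ofReal (u ^ p1 * Real.exp (-(s*u)/2) * g u))
          ≤ Cnum := hLHS
        _ = ENNReal.ofReal ((Cnum.toReal / ρ.toReal) * ρ.toReal) := by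
            rw [div_mul_cancel₀ _ hρt.ne', ENNReal.ofReal_toReal hCnumlt.ne]
        _ = ENNReal.ofReal (Cnum.toReal / ρ.toReal) * ρ := by
            rw [ENNReal.ofReal_mul (div_nonneg ENNReal.toReal_nonneg hρt.le),
              ENNReal.ofReal_toReal hρne]
        _ ≤ ENNReal.ofReal (lam * s + L) *
              ∫⁻ u in Ioi (0:ℝ), ENNReal.ofReal (u ^ p2 * Real.exp (-(s*u)/2) * g u) := by
            apply mul_le_mul' _ hRHS
            apply ENNReal.ofReal_le_ofReal
            have : Cnum.toReal / ρ.toReal ≤ L := by rw [hLdef]; exact le_max_left _ _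
            nlinarith
    · -- large s
      have hspos : 0 < s := hs₀pos.trans hss
      obtain ⟨t, htdef⟩ : ∃ x : ℝ, x = 2/(lam*s) := ⟨_, rfl⟩
      have ht : 0 < t := by rw [htdef]; positivity
      have hst : s * t = 2/lam := by rw [htdef]; field_simp
      have h4s : 4/(lam*η) < s := by rw [hs₀def] at hss; linarith
      have h4 : 4 < s * (lam*η) := by rwa [div_lt_iff₀ (by positivity)] at h4s
      have h2t : 2*t < η := by
        rw [htdef, show 2*(2/(lam*s)) = 4/(lam*s) by ring, div_lt_iff₀ (by positivity)]
        nlinarith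
      have htη : t < η := by linarith
      have htIoo : t ∈ Ioo (0:ℝ) η := ⟨ht, htη⟩
      have hgtnn : 0 ≤ g t := hgnn t ht
      have htc : (0:ℝ) < t ^ c := Real.rpow_pos_of_pos ht c
      have hsplitL : (∫⁻ u in Ioi (0:ℝ), ENNReal.ofReal (u ^ p1 * Real.exp (-(s*u)/2) * g u)) =
          (∫⁻ u in Ioo (0:ℝ) t, ENNReal.ofReal (u ^ p1 * Real.exp (-(s*u)/2) * g u)) +
          ∫⁻ u in Ici t, ENNReal.ofReal (u ^ p1 * Real.exp (-(s*u)/2) * g u) := by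
        rw [← Ioo_union_Ici_eq_Ioi ht, lintegral_union measurableSet_Ici
          (disjoint_left.mpr fun x hx hx' => absurd hx' (not_le.mpr hx.2))]
      have hhead : (∫⁻ u in Ioo (0:ℝ) t, ENNReal.ofReal (u ^ p1 * Real.exp (-(s*u)/2) * g u)) ≤
          ENNReal.ofReal ((g t / t ^ c) * (t ^ (p1+c+1) / (p1+c+1))) := by
        have hpt : ∀ u ∈ Ioo (0:ℝ) t,
            ENNReal.ofReal (u ^ p1 * Real.exp (-(s*u)/2) * g u) ≤
            ENNReal.ofReal ((g t / t ^ c) * u ^ (p1+c)) := by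
          intro u hu
          apply ENNReal.ofReal_le_ofReal
          have hu0 : 0 < u := hu.1
          have huη : u ∈ Ioo (0:ℝ) η := ⟨hu0, hu.2.trans htη⟩
          have hmm := (hsm huη htIoo hu.2).le
          have hucpos : (0:ℝ) < u ^ c := Real.rpow_pos_of_pos hu0 c
          have hgu : g u ≤ (g t / t ^ c) * u ^ c := by
            have hrw : g u = (g u / u ^ c) * u ^ c := by field_simp
            rw [hrw]
            exact mul_le_mul_of_nonneg_right hmm hucpos.le
          have he1 : Real.exp (-(s*u)/2) ≤ 1 := by
            apply Real.exp_le_one_iff.mpr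
            nlinarith
          have hup1 : 0 ≤ u ^ p1 := Real.rpow_nonneg hu0.le _
          calc u ^ p1 * Real.exp (-(s*u)/2) * g u ≤ u ^ p1 * 1 * g u :=
                mul_le_mul_of_nonneg_right (mul_le_mul_of_nonneg_left he1 hup1) (hgnn u hu0)
            _ = u ^ p1 * g u := by ring
            _ ≤ u ^ p1 * ((g t / t ^ c) * u ^ c) := mul_le_mul_of_nonneg_left hgu hup1
            _ = (g t / t ^ c) * (u ^ p1 * u ^ c) := by ring
            _ = (g t / t ^ c) * u ^ (p1+c) := by rw [← Real.rpow_add hu0]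
        calc (∫⁻ u in Ioo (0:ℝ) t, ENNReal.ofReal (u ^ p1 * Real.exp (-(s*u)/2) * g u))
            ≤ ∫⁻ u in Ioo (0:ℝ) t, ENNReal.ofReal ((g t / t ^ c) * u ^ (p1+c)) :=
              setLIntegral_mono (by fun_prop) hpt
          _ = ENNReal.ofReal (g t / t ^ c) * ∫⁻ u in Ioo (0:ℝ) t, ENNReal.ofReal (u ^ (p1+c)) := by
              simp_rw [ENNReal.ofReal_mul (div_nonneg hgtnn htc.le)]
              exact lintegral_const_mul _ (by fun_prop)
          _ = ENNReal.ofReal (g t / t ^ c) * ENNReal.ofReal (t ^ (p1+c+1) / (p1+c+1)) := by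
              rw [lint_rpow ht hq]
          _ = _ := by rw [← ENNReal.ofReal_mul (div_nonneg hgtnn htc.le)]
      have hD : ENNReal.ofReal (t ^ p2 * Real.exp (-(s*(2*t))/2) * g t * t) ≤
          ∫⁻ u in Ioi (0:ℝ), ENNReal.ofReal (u ^ p2 * Real.exp (-(s*u)/2) * g u) := by
        refine le_trans ?_ (lintegral_mono_set fun u (hu : u ∈ Ioc t (2*t)) =>
          mem_Ioi.mpr (ht.trans hu.1))
        have hpt : ∀ u ∈ Ioc t (2*t),
            ENNReal.ofReal (t ^ p2 * Real.exp (-(s*(2*t))/2) * g t) ≤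
            ENNReal.ofReal (u ^ p2 * Real.exp (-(s*u)/2) * g u) := by
          intro u hu
          apply ENNReal.ofReal_le_ofReal
          have hu0 : 0 < u := ht.trans hu.1
          have huη : u ∈ Ioo (0:ℝ) η := ⟨hu0, lt_of_le_of_lt hu.2 h2t⟩
          have h1 : t ^ p2 ≤ u ^ p2 := Real.rpow_le_rpow ht.le hu.1.le hp2pos.le
          have h2 : Real.exp (-(s*(2*t))/2) ≤ Real.exp (-(s*u)/2) := by
            apply Real.exp_le_exp.mpr
            have : s * u ≤ s * (2*t) := by nlinarith [hu.2]
            linarith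
          have h3 : g t ≤ g u := by
            have hmm := (hsm htIoo huη hu.1).le
            have hucpos : (0:ℝ) < u ^ c := Real.rpow_pos_of_pos hu0 c
            have htcle : t ^ c ≤ u ^ c := Real.rpow_le_rpow ht.le hu.1.le hcpos.le
            calc g t = (g t / t ^ c) * t ^ c := by field_simp
              _ ≤ (g u / u ^ c) * t ^ c := mul_le_mul_of_nonneg_right hmm htc.le
              _ ≤ (g u / u ^ c) * u ^ c :=
                  mul_le_mul_of_nonneg_left htcle (div_nonneg (hgnn u hu0) hucpos.le)
              _ = g u := by field_simp
          calc t ^ p2 * Real.exp (-(s*(2*t))/2) * g t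
              ≤ (u ^ p2 * Real.exp (-(s*u)/2)) * g u := by
                apply mul_le_mul _ h3 hgtnn
                  (mul_nonneg (Real.rpow_nonneg hu0.le _) (Real.exp_pos _).le)
                exact mul_le_mul h1 h2 (Real.exp_pos _).le (Real.rpow_nonneg hu0.le _)
            _ = u ^ p2 * Real.exp (-(s*u)/2) * g u := by ring
        calc ENNReal.ofReal (t ^ p2 * Real.exp (-(s*(2*t))/2) * g t * t)
            = ENNReal.ofReal (t ^ p2 * Real.exp (-(s*(2*t))/2) * g t) * volume (Ioc t (2*t)) := by
              rw [Real.volume_Ioc, show 2*t - t = t by ring,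
                ← ENNReal.ofReal_mul (by positivity :
                  (0:ℝ) ≤ t ^ p2 * Real.exp (-(s*(2*t))/2) * g t)]
          _ = ∫⁻ _ in Ioc t (2*t),
                ENNReal.ofReal (t ^ p2 * Real.exp (-(s*(2*t))/2) * g t) :=
              (setLIntegral_const _ _).symm
          _ ≤ ∫⁻ u in Ioc t (2*t), ENNReal.ofReal (u ^ p2 * Real.exp (-(s*u)/2) * g u) :=
              setLIntegral_mono (measF hgmeas p2 s) hpt
      have hE : (g t / t ^ c) * (t ^ (p1+c+1) / (p1+c+1)) =
          (Real.exp (2/lam) * (lam*s/2) / (p2+c)) *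
            (t ^ p2 * Real.exp (-(s*(2*t))/2) * g t * t) := by
        have h1 : p1 + c + 1 = p2 + c := by linarith
        have h2 : t ^ (p2+c) = t ^ p2 * t ^ c := Real.rpow_add ht _ _
        have h3 : -(s*(2*t))/2 = -(2/lam) := by
          have : s*(2*t) = 2*(s*t) := by ring
          rw [this, hst]; ring
        have h5 : lam * s / 2 * t = 1 := by
          rw [htdef]; field_simp
        have hexp : (0:ℝ) < Real.exp (2/lam) := Real.exp_pos _
        have hp2c : (0:ℝ) < p2 + c := by linarith
        calc (g t / t ^ c) * (t ^ (p1+c+1) / (p1+c+1))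
            = t ^ p2 * g t / (p2+c) := by
              rw [h1, h2]
              field_simp
          _ = (lam * s / 2 * t) * (t ^ p2 * g t / (p2+c)) := by rw [h5, one_mul]
          _ = (Real.exp (2/lam) * (lam*s/2) / (p2+c)) *
                (t ^ p2 * Real.exp (-(s*(2*t))/2) * g t * t) := by
              rw [h3, Real.exp_neg]
              field_simp
      have htail : (∫⁻ u in Ici t, ENNReal.ofReal (u ^ p1 * Real.exp (-(s*u)/2) * g u)) ≤
          ENNReal.ofReal (1/t) *
            ∫⁻ u in Ioi (0:ℝ), ENNReal.ofReal (u ^ p2 * Real.exp (-(s*u)/2) * g u) := by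
        have hpt : ∀ u ∈ Ici t, ENNReal.ofReal (u ^ p1 * Real.exp (-(s*u)/2) * g u) ≤
            ENNReal.ofReal ((1/t) * (u ^ p2 * Real.exp (-(s*u)/2) * g u)) := by
          intro u hu
          have hu0 : 0 < u := ht.trans_le hu
          apply ENNReal.ofReal_le_ofReal
          have hnn : 0 ≤ Real.exp (-(s*u)/2) * g u :=
            mul_nonneg (Real.exp_pos _).le (hgnn u hu0)
          calc u ^ p1 * Real.exp (-(s*u)/2) * g u
              = u ^ p1 * (Real.exp (-(s*u)/2) * g u) := by ring
            _ ≤ ((1/t) * u ^ p2) * (Real.exp (-(s*u)/2) * g u) :=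
                mul_le_mul_of_nonneg_right (rpow_p1_le hp12 ht hu) hnn
            _ = (1/t) * (u ^ p2 * Real.exp (-(s*u)/2) * g u) := by ring
        calc (∫⁻ u in Ici t, ENNReal.ofReal (u ^ p1 * Real.exp (-(s*u)/2) * g u))
            ≤ ∫⁻ u in Ici t, ENNReal.ofReal ((1/t) * (u ^ p2 * Real.exp (-(s*u)/2) * g u)) :=
              setLIntegral_mono (by fun_prop) hpt
          _ = ENNReal.ofReal (1/t) *
                ∫⁻ u in Ici t, ENNReal.ofReal (u ^ p2 * Real.exp (-(s*u)/2) * g u) := by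
              simp_rw [ENNReal.ofReal_mul (by positivity : (0:ℝ) ≤ 1/t)]
              exact lintegral_const_mul _ (measF hgmeas p2 s)
          _ ≤ _ :=
              mul_le_mul_right (lintegral_mono_set fun u hu => mem_Ioi.mpr (ht.trans_le hu)) _
      have hKnn : (0:ℝ) ≤ Real.exp (2/lam) * (lam*s/2) / (p2+c) := by positivity
      have hKle : Real.exp (2/lam) * (lam*s/2) / (p2+c) + 1/t ≤ lam * s + L := by
        have h1t : 1/t = lam*s/2 := by rw [htdef]; rw [one_div_div]
        have hK : Real.exp (2/lam) * (lam*s/2) / (p2+c) ≤ lam*s/2 := by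
          rw [div_le_iff₀ (by linarith : (0:ℝ) < p2 + c)]
          nlinarith [Real.exp_pos (2/lam)]
        have hL0 : (0:ℝ) ≤ L := by rw [hLdef]; exact le_max_right _ _
        rw [h1t]
        linarith
      calc (∫⁻ u in Ioi (0:ℝ), ENNReal.ofReal (u ^ p1 * Real.exp (-(s*u)/2) * g u))
          = (∫⁻ u in Ioo (0:ℝ) t, ENNReal.ofReal (u ^ p1 * Real.exp (-(s*u)/2) * g u)) +
            ∫⁻ u in Ici t, ENNReal.ofReal (u ^ p1 * Real.exp (-(s*u)/2) * g u) := hsplitL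
        _ ≤ ENNReal.ofReal ((g t / t ^ c) * (t ^ (p1+c+1) / (p1+c+1))) +
            ENNReal.ofReal (1/t) *
              ∫⁻ u in Ioi (0:ℝ), ENNReal.ofReal (u ^ p2 * Real.exp (-(s*u)/2) * g u) :=
            add_le_add hhead htail
        _ ≤ ENNReal.ofReal (Real.exp (2/lam) * (lam*s/2) / (p2+c)) *
              (∫⁻ u in Ioi (0:ℝ), ENNReal.ofReal (u ^ p2 * Real.exp (-(s*u)/2) * g u)) +
            ENNReal.ofReal (1/t) *
              ∫⁻ u in Ioi (0:ℝ), ENNReal.ofReal (u ^ p2 * Real.exp (-(s*u)/2) * g u) := by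
            apply add_le_add_left
            rw [hE, ENNReal.ofReal_mul hKnn]
            exact mul_le_mul_right hD _
        _ = ENNReal.ofReal (Real.exp (2/lam) * (lam*s/2) / (p2+c) + 1/t) *
              ∫⁻ u in Ioi (0:ℝ), ENNReal.ofReal (u ^ p2 * Real.exp (-(s*u)/2) * g u) := by
            rw [ENNReal.ofReal_add hKnn (by positivity), add_mul]
        _ ≤ ENNReal.ofReal (lam * s + L) *
              ∫⁻ u in Ioi (0:ℝ), ENNReal.ofReal (u ^ p2 * Real.exp (-(s*u)/2) * g u) :=
            mul_le_mul_left (ENNReal.ofReal_le_ofReal hKle) _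

theorem finite_mixture_drift_bound' (d : ℕ) (hd : 0 < d) (M : ℕ) (hM0 : 0 < M)
    (hs : Fin M → ℝ → ℝ)
    (hmix : ∀ i, Measurable (hs i) ∧ (∀ u ∈ Ioi (0:ℝ), 0 ≤ hs i u) ∧
      ∫⁻ u in Ioi (0:ℝ), ENNReal.ofReal (hs i u) = 1)
    (hcondM : ∀ i, ∫⁻ u in Ioi (0:ℝ), ENNReal.ofReal (u ^ ((d : ℝ) / 2) * hs i u) < ⊤)
    (hclass : ∀ i, ZeroNearOrigin (hs i) ∨ FasterThanPolynomialNearOrigin (hs i))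
    (w : Fin M → ℝ) (hw : ∀ i, 0 < w i) (hwsum : ∑ i, w i = 1)
    (h : ℝ → ℝ) (hdef : ∀ u : ℝ, h u = ∑ i, w i * hs i u) :
    ∀ lam : ℝ, 0 < lam → ∃ L : ℝ, ∀ s : ℝ, 0 ≤ s →
      (∫⁻ u in Ioi (0:ℝ),
          ENNReal.ofReal (u ^ (((d : ℝ) - 2) / 2) * Real.exp (-(s * u) / 2) * h u))
        ≤ ENNReal.ofReal (lam * s + L) *
          ∫⁻ u in Ioi (0:ℝ),
            ENNReal.ofReal (u ^ ((d : ℝ) / 2) * Real.exp (-(s * u) / 2) * h u) := by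
  intro lam hlam
  have hkey : ∀ i, ∃ L : ℝ, 0 ≤ L ∧ ∀ s : ℝ, 0 ≤ s →
      (∫⁻ u in Ioi (0:ℝ),
          ENNReal.ofReal (u ^ (((d:ℝ)-2)/2) * Real.exp (-(s*u)/2) * hs i u))
        ≤ ENNReal.ofReal (lam * s + L) *
          ∫⁻ u in Ioi (0:ℝ),
            ENNReal.ofReal (u ^ ((d:ℝ)/2) * Real.exp (-(s*u)/2) * hs i u) :=
    fun i => key d hd (hs i) (hmix i).1 (hmix i).2.1 (hmix i).2.2 (hcondM i) (hclass i) lam hlam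
  choose Lf hLf0 hLf using hkey
  refine ⟨∑ i, Lf i, fun s hs' => ?_⟩
  have hLsum : ∀ i, Lf i ≤ ∑ j, Lf j := fun i =>
    Finset.single_le_sum (fun j _ => hLf0 j) (Finset.mem_univ i)
  have expand : ∀ p : ℝ,
      (∫⁻ u in Ioi (0:ℝ), ENNReal.ofReal (u ^ p * Real.exp (-(s*u)/2) * h u)) =
      ∑ i, ENNReal.ofReal (w i) *
        ∫⁻ u in Ioi (0:ℝ), ENNReal.ofReal (u ^ p * Real.exp (-(s*u)/2) * hs i u) := by
    intro p
    have hmeas : ∀ i : Fin M, i ∈ Finset.univ → Measurable fun u : ℝ =>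
        ENNReal.ofReal (w i) * ENNReal.ofReal (u ^ p * Real.exp (-(s*u)/2) * hs i u) :=
      fun i _ => (measF (hmix i).1 p s).const_mul _
    calc (∫⁻ u in Ioi (0:ℝ), ENNReal.ofReal (u ^ p * Real.exp (-(s*u)/2) * h u))
        = ∫⁻ u in Ioi (0:ℝ), ∑ i, ENNReal.ofReal (w i) *
            ENNReal.ofReal (u ^ p * Real.exp (-(s*u)/2) * hs i u) := by
          apply setLIntegral_congr_fun measurableSet_Ioi
          intro u hu
          have hu0 : (0:ℝ) < u := hu
          dsimp only
          rw [hdef u]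
          have h1 : u ^ p * Real.exp (-(s*u)/2) * (∑ i, w i * hs i u) =
              ∑ i, w i * (u ^ p * Real.exp (-(s*u)/2) * hs i u) := by
            rw [Finset.mul_sum]
            exact Finset.sum_congr rfl fun i _ => by ring
          rw [h1, ENNReal.ofReal_sum_of_nonneg]
          · exact Finset.sum_congr rfl fun i _ => ENNReal.ofReal_mul (hw i).le
          · intro i _
            have h2 := (hmix i).2.1 u hu
            have hup : 0 ≤ u ^ p := Real.rpow_nonneg hu0.le p
            have h3 := (Real.exp_pos (-(s*u)/2)).le
            exact mul_nonneg (hw i).le (mul_nonneg (mul_nonneg hup h3) h2)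
      _ = ∑ i, ∫⁻ u in Ioi (0:ℝ), ENNReal.ofReal (w i) *
            ENNReal.ofReal (u ^ p * Real.exp (-(s*u)/2) * hs i u) :=
          lintegral_finset_sum _ fun i _ => (measF (hmix i).1 p s).const_mul _
      _ = _ := Finset.sum_congr rfl fun i _ =>
          lintegral_const_mul _ (measF (hmix i).1 p s)
  calc (∫⁻ u in Ioi (0:ℝ),
        ENNReal.ofReal (u ^ (((d:ℝ)-2)/2) * Real.exp (-(s*u)/2) * h u))
      = ∑ i, ENNReal.ofReal (w i) *
          ∫⁻ u in Ioi (0:ℝ),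
            ENNReal.ofReal (u ^ (((d:ℝ)-2)/2) * Real.exp (-(s*u)/2) * hs i u) := expand _
    _ ≤ ∑ i, ENNReal.ofReal (w i) * (ENNReal.ofReal (lam * s + ∑ j, Lf j) *
          ∫⁻ u in Ioi (0:ℝ),
            ENNReal.ofReal (u ^ ((d:ℝ)/2) * Real.exp (-(s*u)/2) * hs i u)) := by
        apply Finset.sum_le_sum
        intro i _
        apply mul_le_mul_right
        exact (hLf i s hs').trans (mul_le_mul_left
          (ENNReal.ofReal_le_ofReal (by linarith [hLsum i])) _)
    _ = ENNReal.ofReal (lam * s + ∑ j, Lf j) * ∑ i, ENNReal.ofReal (w i) *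
          ∫⁻ u in Ioi (0:ℝ),
            ENNReal.ofReal (u ^ ((d:ℝ)/2) * Real.exp (-(s*u)/2) * hs i u) := by
        rw [Finset.mul_sum]
        exact Finset.sum_congr rfl fun i _ => mul_left_comm _ _ _
    _ = _ := by rw [← expand ((d:ℝ)/2)]

/-- A finite mixture `h = Σ wᵢ hᵢ` of mixing densities, each satisfying condition `M` and each
either zero near the origin or faster than polynomial near the origin, satisfies: for every
`λ > 0` there is `L ∈ ℝ` with
`∫_0^∞ u^{(d-2)/2} e^{-su/2} h du ≤ (λ s + L) ∫_0^∞ u^{d/2} e^{-su/2} h du` for all `s ≥ 0`. -/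
theorem finite_mixture_drift_bound (d : ℕ) (hd : 0 < d) (M : ℕ) (hM0 : 0 < M)
    (hs : Fin M → ℝ → ℝ) (hmix : ∀ i, IsMixingDensity (hs i))
    (hcondM : ∀ i, ∫⁻ u in Ioi (0:ℝ), ENNReal.ofReal (u ^ ((d : ℝ) / 2) * hs i u) < ⊤)
    (hclass : ∀ i, ZeroNearOrigin (hs i) ∨ FasterThanPolynomialNearOrigin (hs i))
    (w : Fin M → ℝ) (hw : ∀ i, 0 < w i) (hwsum : ∑ i, w i = 1)
    (h : ℝ → ℝ) (hdef : ∀ u : ℝ, h u = ∑ i, w i * hs i u) :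
    ∀ lam : ℝ, 0 < lam → ∃ L : ℝ, ∀ s : ℝ, 0 ≤ s →
      (∫⁻ u in Ioi (0:ℝ),
          ENNReal.ofReal (u ^ (((d : ℝ) - 2) / 2) * Real.exp (-(s * u) / 2) * h u))
        ≤ ENNReal.ofReal (lam * s + L) *
          ∫⁻ u in Ioi (0:ℝ),
            ENNReal.ofReal (u ^ ((d : ℝ) / 2) * Real.exp (-(s * u) / 2) * h u) := by
  exact finite_mixture_drift_bound' d hd M hM0 hs hmix hcondM hclass w hw hwsum h hdef
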